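/- arXiv:2504.18465 — 2 statements merged into one kernel-verified Lean document; each statement's English description precedes it below -/
import Mathlib

section
/- Define φ₁(θ₁,θ₂) = (1/3)(e^{2πiθ₁} + e^{−2πiθ₂} + e^{2πi(θ₂−θ₁)}) for real θ₁, θ₂, and let Δ = { φ₁(θ) : θ ∈ ℝ² }. Then Δ = { x+iy ∈ ℂ : 3(x²+y²+1)² + 8(−x³+3xy²) ≤ 4 }. -/
open Complex

/-- The first component of the generalized cosine for the root system `A₂`. -/
noncomputable def phi1 (θ : ℝ × ℝ) : ℂ :=
  (1 / 3) * (Complex.exp (2 * Real.pi * Complex.I * θ.1) +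
    Complex.exp (-(2 * Real.pi * Complex.I * θ.2)) +
    Complex.exp (2 * Real.pi * Complex.I * (θ.2 - θ.1)))

open ComplexConjugate Polynomial

lemma cube_re (z : ℂ) : (z^3).re = z.re^3 - 3*z.re*z.im^2 := by
  simp [pow_succ, Complex.mul_re, Complex.mul_im]; ring

lemma bridge (z : ℂ) :
    ((3*(z.re^2+z.im^2+1)^2 + 8*(-(z.re^3)+3*z.re*z.im^2) - 4 : ℝ) : ℂ)
      = 3*(z*conj z+1)^2 - 4*(z^3+(conj z)^3) - 4 := by
  have h1 : z * conj z = ((z.re^2+z.im^2 : ℝ):ℂ) := by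
    rw [Complex.mul_conj]; norm_cast; simp [Complex.normSq_apply]; try ring
  have h2 : z^3 + (conj z)^3 = ((2*(z.re^3 - 3*z.re*z.im^2) : ℝ):ℂ) := by
    rw [← map_pow, Complex.add_conj, cube_re]
  rw [h1, h2]; push_cast; ring

lemma aux_alg (u k : ℂ) (hu : u ≠ 0) (hk : k ≠ 0) :
    ((u - k⁻¹) * (k⁻¹ - k/u) * (k/u - u))^2 =
      ((u*k-1)^2 * (u*k + (u*k)^2 - (u^3+k^3))^2) / (u*k)^4 := by
  field_simp
  ring

lemma aux_pos (u : ℂ) (hu : u ≠ 0) (h1 : ‖u‖ ≠ 1) :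
    0 < (((u - (conj u)⁻¹) * ((conj u)⁻¹ - conj u/u) * (conj u/u - u))^2).re := by
  have hk : conj u ≠ 0 := by simpa using hu
  set a := ‖u‖ with ha_def
  have ha : 0 < a := norm_pos_iff.mpr hu
  have hmul : u * conj u = ((a^2 : ℝ) : ℂ) := by
    rw [Complex.mul_conj]; norm_cast; exact (Complex.sq_norm u).symm
  have hS : u^3 + (conj u)^3 = ((2*(u^3).re : ℝ) : ℂ) := by
    rw [← map_pow, Complex.add_conj]
  rw [aux_alg u (conj u) hu hk, hmul, hS]
  have hcast : (((a^2:ℝ):ℂ) - 1)^2 * (((a^2:ℝ):ℂ) + ((a^2:ℝ):ℂ)^2 - ((2*(u^3).re : ℝ):ℂ))^2 / ((a^2:ℝ):ℂ)^4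
      = (((a^2 - 1)^2 * (a^2 + a^4 - 2*(u^3).re)^2 / a^8 : ℝ) : ℂ) := by
    push_cast; ring
  rw [hcast, Complex.ofReal_re]
  have hr : (u^3).re ≤ a^3 := by
    calc (u^3).re ≤ ‖u^3‖ := Complex.re_le_norm _
    _ = a^3 := by rw [norm_pow]
  have hane : a ≠ 1 := h1
  have hne1 : a^2 - a ≠ 0 := by
    intro h
    have : a * (a - 1) = 0 := by linarith [h]
    rcases mul_eq_zero.mp this with h' | h'
    · exact absurd h' ha.ne'
    · exact hane (by linarith)
  have hne2 : a^2 - 1 ≠ 0 := by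
    intro h
    have : (a - 1) * (a + 1) = 0 := by linarith [h]
    rcases mul_eq_zero.mp this with h' | h'
    · exact hane (by linarith)
    · linarith
  have h2 : 0 < a^2 + a^4 - 2*(u^3).re := by
    have key : 0 < (a^2 - a)^2 := lt_of_le_of_ne (sq_nonneg _) (Ne.symm (pow_ne_zero 2 hne1))
    nlinarith
  have h1sq : 0 < (a^2-1)^2 := lt_of_le_of_ne (sq_nonneg _) (Ne.symm (pow_ne_zero 2 hne2))
  exact div_pos (mul_pos h1sq (pow_pos h2 2)) (pow_pos ha 8)

lemma all_on_circle (z u v w : ℂ) (he1 : u+v+w = 3*z)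
    (he2 : u*v+v*w+w*u = 3*conj z) (he3 : u*v*w = 1)
    (hD : (((u-v)*(v-w)*(w-u))^2).re ≤ 0) : ‖u‖ = 1 := by
  have hu0 : u ≠ 0 := by intro h; rw [h] at he3; simp at he3
  have hv0 : v ≠ 0 := by intro h; rw [h] at he3; simp at he3
  have hw0 : w ≠ 0 := by intro h; rw [h] at he3; simp at he3
  by_contra habs
  have hcroot : (conj u)^3 - 3*(conj z)*(conj u)^2 + 3*z*(conj u) - 1 = 0 := by
    have hroot : u^3 - 3*z*u^2 + 3*(conj z)*u - 1 = 0 := by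
      linear_combination (u^2)*he1 - u*he2 + he3
    have := congrArg (starRingEnd ℂ) hroot
    simpa [map_ofNat] using this
  have hfac : ((conj u) - v*w)*((conj u) - u*w)*((conj u) - u*v)
      = (conj u)^3 - 3*(conj z)*(conj u)^2 + 3*z*(conj u) - 1 := by
    linear_combination (-(conj u)^2) * he2 + (conj u) * he1 + ((conj u)*(u+v+w) - (u*v*w+1)) * he3
  have h0 : ((conj u) - v*w)*((conj u) - u*w)*((conj u) - u*v) = 0 := hfac.trans hcroot
  rcases mul_eq_zero.mp h0 with h01 | hC
  · rcases mul_eq_zero.mp h01 with hA | hB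
    · apply habs
      have : u * conj u = 1 := by
        rw [sub_eq_zero] at hA; rw [hA]; linear_combination he3
      have h2 : ((Complex.normSq u : ℝ):ℂ) = 1 := by rw [← Complex.mul_conj]; exact this
      have h3 : Complex.normSq u = 1 := by exact_mod_cast h2
      have := Complex.sq_norm u
      nlinarith [norm_nonneg u]
    · rw [sub_eq_zero] at hB
      have hw' : w = conj u / u := by rw [eq_div_iff hu0]; linear_combination -hB
      have hv' : v = (conj u)⁻¹ := by
        have h1 : v * (u*w) = 1 := by linear_combination he3
        rw [← hB] at h1
        exact eq_inv_of_mul_eq_one_left h1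
      have hpos := aux_pos u hu0 habs
      have heq : ((u-v)*(v-w)*(w-u))^2
          = ((u - (conj u)⁻¹) * ((conj u)⁻¹ - conj u/u) * (conj u/u - u))^2 := by
        rw [hv', hw']
      rw [heq] at hD; linarith
  · rw [sub_eq_zero] at hC
    have hv' : v = conj u / u := by rw [eq_div_iff hu0]; linear_combination -hC
    have hw' : w = (conj u)⁻¹ := by
      have h1 : w * (u*v) = 1 := by linear_combination he3
      rw [← hC] at h1
      exact eq_inv_of_mul_eq_one_left h1
    have hpos := aux_pos u hu0 habs
    have heq : ((u-v)*(v-w)*(w-u))^2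
        = ((u - (conj u)⁻¹) * ((conj u)⁻¹ - conj u/u) * (conj u/u - u))^2 := by
      rw [hv', hw']; ring
    rw [heq] at hD; linarith

lemma disc_id (z u v w : ℂ) (hz : z = (u+v+w)/3)
    (hc : conj z = (v*w+w*u+u*v)/3) (h3 : u*v*w = 1) :
    3*(z*conj z+1)^2 - 4*(z^3+(conj z)^3) - 4
      = (1/27)*((u-v)*(v-w)*(w-u))^2 := by
  rw [hc, hz]
  linear_combination (-(1/27) * (-4*(u+v+w)^3 + 18*(u+v+w)*(v*w+w*u+u*v) - 27 - 27*(u*v*w))) * h3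

lemma ineq_of (z u v : ℂ) (hu : ‖u‖ = 1) (hv : ‖v‖ = 1)
    (hz : 3*z = u + v + (u*v)⁻¹) :
    3*(z.re^2+z.im^2+1)^2 + 8*(-(z.re^3)+3*z.re*z.im^2) ≤ 4 := by
  have hu0 : u ≠ 0 := by intro h; rw [h] at hu; simp at hu
  have hv0 : v ≠ 0 := by intro h; rw [h] at hv; simp at hv
  have hcu : conj u = u⁻¹ := by
    have h1 : u * conj u = 1 := by
      rw [Complex.mul_conj]
      norm_cast
      rw [← Complex.sq_norm, hu]; norm_num
    exact eq_inv_of_mul_eq_one_left (by linear_combination h1)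
  have hcv : conj v = v⁻¹ := by
    have h1 : v * conj v = 1 := by
      rw [Complex.mul_conj]
      norm_cast
      rw [← Complex.sq_norm, hv]; norm_num
    exact eq_inv_of_mul_eq_one_left (by linear_combination h1)
  set w := (u*v)⁻¹ with hw_def
  have hw0 : w ≠ 0 := by simp [hw_def, hu0, hv0]
  have h3 : u*v*w = 1 := by rw [hw_def]; field_simp
  have hz' : z = (u + v + w)/3 := by linear_combination hz/3
  have hc0 : conj z = (u⁻¹ + v⁻¹ + v*u)/3 := by
    have := congrArg (starRingEnd ℂ) hz'
    simpa [map_add, map_mul, map_inv₀, hcu, hcv, map_ofNat, mul_inv, inv_inv, hw_def] using this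
  have hc' : conj z = (v*w+w*u+u*v)/3 := by
    rw [hc0, hw_def]
    field_simp
  have hck : conj ((u-v)*(v-w)*(w-u)) = -((u-v)*(v-w)*(w-u)) := by
    simp only [map_mul, map_sub, map_inv₀, hcu, hcv, hw_def, inv_inv, mul_inv]
    field_simp
    ring
  set k := (u-v)*(v-w)*(w-u) with hk_def
  have hk2 : k^2 = -((Complex.normSq k : ℝ):ℂ) := by
    rw [← Complex.mul_conj k, hck]; ring
  have hmain : ((3*(z.re^2+z.im^2+1)^2 + 8*(-(z.re^3)+3*z.re*z.im^2) - 4 : ℝ):ℂ)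
      = ((-(Complex.normSq k)/27 : ℝ):ℂ) := by
    rw [bridge z, disc_id z u v w hz' hc' h3, ← hk_def, hk2]
    push_cast
    ring
  have hre : (3*(z.re^2+z.im^2+1)^2 + 8*(-(z.re^3)+3*z.re*z.im^2) - 4 : ℝ)
      = -(Complex.normSq k)/27 := by exact_mod_cast hmain
  have := Complex.normSq_nonneg k
  linarith

lemma exists_theta (u v : ℂ) (hu : ‖u‖ = 1) (hv : ‖v‖ = 1) :
    ∃ θ : ℝ × ℝ, phi1 θ = (u + v + (u*v)⁻¹)/3 := by
  have hu0 : u ≠ 0 := by intro h; rw [h] at hu; simp at hu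
  have hv0 : v ≠ 0 := by intro h; rw [h] at hv; simp at hv
  have hpi : (Real.pi : ℝ) ≠ 0 := Real.pi_ne_zero
  have hpic : (Real.pi : ℂ) ≠ 0 := by exact_mod_cast hpi
  refine ⟨(Complex.arg u / (2*Real.pi), -Complex.arg v / (2*Real.pi)), ?_⟩
  have hA : Complex.exp (2 * Real.pi * Complex.I * ((Complex.arg u / (2*Real.pi) : ℝ):ℂ)) = u := by
    have : (2 * (Real.pi:ℂ) * Complex.I * ((Complex.arg u / (2*Real.pi) : ℝ):ℂ)) = (Complex.arg u : ℝ) * Complex.I := by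
      push_cast
      field_simp [hpic]
    rw [this]
    have := Complex.norm_mul_exp_arg_mul_I u
    rwa [hu, Complex.ofReal_one, one_mul] at this
  have hB : Complex.exp (-(2 * Real.pi * Complex.I * ((-Complex.arg v / (2*Real.pi) : ℝ):ℂ))) = v := by
    have : -(2 * (Real.pi:ℂ) * Complex.I * ((-Complex.arg v / (2*Real.pi) : ℝ):ℂ)) = (Complex.arg v : ℝ) * Complex.I := by
      push_cast
      field_simp [hpic]
    rw [this]
    have := Complex.norm_mul_exp_arg_mul_I v
    rwa [hv, Complex.ofReal_one, one_mul] at this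
  have hC : Complex.exp (2 * Real.pi * Complex.I * (((-Complex.arg v / (2*Real.pi) : ℝ):ℂ) - ((Complex.arg u / (2*Real.pi) : ℝ):ℂ))) = (u*v)⁻¹ := by
    have h1 : (2 * (Real.pi:ℂ) * Complex.I * (((-Complex.arg v / (2*Real.pi) : ℝ):ℂ) - ((Complex.arg u / (2*Real.pi) : ℝ):ℂ)))
        = -((Complex.arg u : ℝ) * Complex.I) + -((Complex.arg v : ℝ) * Complex.I) := by
      push_cast
      field_simp [hpic]
      ring
    rw [h1, Complex.exp_add, Complex.exp_neg, Complex.exp_neg]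
    have hu' : Complex.exp ((Complex.arg u : ℝ) * Complex.I) = u := by
      have := Complex.norm_mul_exp_arg_mul_I u
      rwa [hu, Complex.ofReal_one, one_mul] at this
    have hv' : Complex.exp ((Complex.arg v : ℝ) * Complex.I) = v := by
      have := Complex.norm_mul_exp_arg_mul_I v
      rwa [hv, Complex.ofReal_one, one_mul] at this
    rw [hu', hv', mul_inv]
  simp only [phi1]
  rw [hA, hB, hC]
  ring

/-- The image `Δ` of the generalized cosine is the region bounded by the Steiner
hypocycloid: `Δ = { x+iy : 3(x²+y²+1)² + 8(−x³+3xy²) ≤ 4 }`. -/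
theorem deltoid_region_eq :
    {z : ℂ | ∃ θ : ℝ × ℝ, z = phi1 θ} =
      {z : ℂ | 3 * (z.re ^ 2 + z.im ^ 2 + 1) ^ 2 +
        8 * (-(z.re ^ 3) + 3 * z.re * z.im ^ 2) ≤ 4} := by
  ext z
  simp only [Set.mem_setOf_eq]
  constructor
  · rintro ⟨θ, rfl⟩
    set u := Complex.exp (2 * Real.pi * Complex.I * θ.1) with hu_def
    set v := Complex.exp (-(2 * Real.pi * Complex.I * θ.2)) with hv_def
    set C := Complex.exp (2 * Real.pi * Complex.I * (θ.2 - θ.1)) with hC_def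
    have hu1 : ‖u‖ = 1 := by
      rw [hu_def, Complex.norm_exp]
      norm_num [Complex.mul_re]
    have hv1 : ‖v‖ = 1 := by
      rw [hv_def, Complex.norm_exp]
      norm_num [Complex.mul_re]
    have hprod : u*v*C = 1 := by
      rw [hu_def, hv_def, hC_def, ← Complex.exp_add, ← Complex.exp_add, ← Complex.exp_zero]
      congr 1
      ring
    have hCinv : (u*v)⁻¹ = C := inv_eq_of_mul_eq_one_right (by linear_combination hprod)
    have hz : 3 * phi1 θ = u + v + (u*v)⁻¹ := by
      rw [phi1, hCinv, ← hu_def, ← hv_def, ← hC_def]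
      ring
    exact ineq_of (phi1 θ) u v hu1 hv1 hz
  · intro hz
    obtain ⟨u, hroot⟩ : ∃ u : ℂ, u^3 - 3*z*u^2 + 3*(conj z)*u - 1 = 0 := by
      have hdeg : (X^3 - C (3*z)*X^2 + C (3*conj z)*X - C 1 : ℂ[X]).degree = 3 := by
        compute_degree!
      have h0 : (0:WithBot ℕ) < (X^3 - C (3*z)*X^2 + C (3*conj z)*X - C 1 : ℂ[X]).degree := by
        rw [hdeg]; norm_num
      obtain ⟨u, hu⟩ := Complex.exists_root h0
      refine ⟨u, ?_⟩
      have := hu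
      simp [Polynomial.IsRoot] at this
      linear_combination this
    obtain ⟨d, hd⟩ : ∃ d : ℂ, d^2 = (u - 3*z)^2 - 4*(u^2 - 3*z*u + 3*conj z) :=
      IsAlgClosed.exists_pow_nat_eq _ (n := 2) (by norm_num)
    obtain ⟨v, hv⟩ : ∃ x : ℂ, x = (3*z - u + d)/2 := ⟨_, rfl⟩
    obtain ⟨w, hw⟩ : ∃ x : ℂ, x = (3*z - u - d)/2 := ⟨_, rfl⟩
    have he1 : u + v + w = 3*z := by rw [hv, hw]; ring
    have he2 : u*v + v*w + w*u = 3*conj z := by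
      rw [hv, hw]; linear_combination (-(1/4) : ℂ)*hd
    have he3 : u*v*w = 1 := by
      rw [hv, hw]; linear_combination (-(u/4))*hd + hroot
    have hD : (((u-v)*(v-w)*(w-u))^2).re ≤ 0 := by
      have hid : ((u-v)*(v-w)*(w-u))^2
          = (u+v+w)^2*(u*v+v*w+w*u)^2 - 4*(u*v+v*w+w*u)^3 - 4*(u+v+w)^3*(u*v*w)
            + 18*(u+v+w)*(u*v+v*w+w*u)*(u*v*w) - 27*(u*v*w)^2 := by ring
      rw [he1, he2, he3] at hid
      have hb := bridge z
      push_cast at hb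
      have key : ((u-v)*(v-w)*(w-u))^2
          = ((27*(3*(z.re^2+z.im^2+1)^2 + 8*(-(z.re^3)+3*z.re*z.im^2) - 4) : ℝ):ℂ) := by
        rw [hid]
        push_cast
        linear_combination (-27)*hb
      rw [key, Complex.ofReal_re]
      nlinarith [hz]
    have hU : ‖u‖ = 1 := all_on_circle z u v w he1 he2 he3 hD
    have hV : ‖v‖ = 1 := by
      refine all_on_circle z v u w (by linear_combination he1) (by linear_combination he2)
        (by linear_combination he3) ?_
      have hperm : ((v-u)*(u-w)*(w-v))^2 = ((u-v)*(v-w)*(w-u))^2 := by ring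
      rw [hperm]; exact hD
    obtain ⟨θ, hθ⟩ := exists_theta u v hU hV
    refine ⟨θ, ?_⟩
    rw [hθ]
    have hwuv : (u*v)⁻¹ = w := inv_eq_of_mul_eq_one_right (by linear_combination he3)
    rw [hwuv]
    linear_combination (-1/3 : ℂ)*he1
end

section
/- There exists a unique sequence of bivariate polynomials f_m ∈ ℂ[x, x̄] such that f_m(φ₁(θ), φ₂(θ)) = φ₁(mθ) for all θ ∈ ℝ², where φ₂ = conj(φ₁); and these satisfy f_0 = 1, f_1 = x, f_2 = 3x² − 2x̄. -/
open Complex MvPolynomial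

noncomputable def cheb : ℕ → MvPolynomial (Fin 2) ℂ
  | 0 => 1
  | 1 => X 0
  | 2 => 3 * X 0 ^ 2 - 2 * X 1
  | (n+3) => 3 * X 0 * cheb (n+2) - 3 * X 1 * cheb (n+1) + cheb n

lemma newton (A B C : ℂ) (h : A*B*C = 1) (n : ℕ) :
    (A+B+C) * (A^(n+2)+B^(n+2)+C^(n+2)) - (A*B+B*C+C*A) * (A^(n+1)+B^(n+1)+C^(n+1))
      + (A^n+B^n+C^n) = A^(n+3)+B^(n+3)+C^(n+3) := by
  linear_combination (-(A^n+B^n+C^n)) * h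

lemma cheb_eval (m : ℕ) (θ : ℝ × ℝ) :
    MvPolynomial.eval
      (fun i : Fin 2 => if i = 0 then phi1 θ else (starRingEnd ℂ) (phi1 θ)) (cheb m) =
      phi1 ((m : ℝ) * θ.1, (m : ℝ) * θ.2) := by
  set A := Complex.exp (2 * Real.pi * Complex.I * θ.1) with hA
  set B := Complex.exp (-(2 * Real.pi * Complex.I * θ.2)) with hB
  set C := Complex.exp (2 * Real.pi * Complex.I * (θ.2 - θ.1)) with hC
  have hABC : A * B * C = 1 := by
    rw [hA, hB, hC, ← Complex.exp_add, ← Complex.exp_add]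
    rw [show 2 * (Real.pi:ℂ) * Complex.I * θ.1 + -(2 * Real.pi * Complex.I * θ.2)
        + 2 * Real.pi * Complex.I * (θ.2 - θ.1) = 0 by push_cast; ring, Complex.exp_zero]
  have hphi : ∀ k : ℕ, phi1 ((k : ℝ) * θ.1, (k : ℝ) * θ.2) = (A^k + B^k + C^k) / 3 := by
    intro k
    rw [phi1, hA, hB, hC, ← Complex.exp_nat_mul, ← Complex.exp_nat_mul, ← Complex.exp_nat_mul]
    push_cast
    ring_nf
  have hval : phi1 θ = (A + B + C) / 3 := by rw [phi1]; ring
  have hconj : (starRingEnd ℂ) (phi1 θ) = (A*B + B*C + C*A) / 3 := by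
    have h1 : (starRingEnd ℂ) A = B * C := by
      rw [hA, hB, hC, ← Complex.exp_conj, ← Complex.exp_add]
      congr 1
      simp only [map_mul, Complex.conj_I, Complex.conj_ofReal, map_ofNat]
      push_cast; ring
    have h2 : (starRingEnd ℂ) B = C * A := by
      rw [hA, hB, hC, ← Complex.exp_conj, ← Complex.exp_add]
      congr 1
      simp only [map_neg, map_mul, Complex.conj_I, Complex.conj_ofReal, map_ofNat]
      push_cast; ring
    have h3 : (starRingEnd ℂ) C = A * B := by
      rw [hA, hB, hC, ← Complex.exp_conj, ← Complex.exp_add]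
      congr 1
      simp only [map_mul, map_sub, Complex.conj_I, Complex.conj_ofReal, map_ofNat]
      push_cast; ring
    rw [phi1, ← hA, ← hB, ← hC]
    simp only [map_mul, map_add, map_one, map_div₀, map_ofNat, h1, h2, h3]
    push_cast; ring
  -- main induction
  set g : Fin 2 → ℂ := fun i => if i = 0 then phi1 θ else (starRingEnd ℂ) (phi1 θ) with hg
  have hg0 : g 0 = (A + B + C)/3 := by rw [hg]; simp [hval]
  have hg1 : g 1 = (A*B + B*C + C*A)/3 := by
    rw [hg]; simp only [if_neg (by decide : ¬((1:Fin 2) = 0))]; exact hconj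
  have key : ∀ n : ℕ,
      (MvPolynomial.eval g (cheb n) = (A^n + B^n + C^n)/3) ∧
      (MvPolynomial.eval g (cheb (n+1)) = (A^(n+1) + B^(n+1) + C^(n+1))/3) ∧
      (MvPolynomial.eval g (cheb (n+2)) = (A^(n+2) + B^(n+2) + C^(n+2))/3) := by
    intro n
    induction n with
    | zero =>
      refine ⟨?_, ?_, ?_⟩
      · show MvPolynomial.eval g (cheb 0) = _
        rw [show cheb 0 = 1 from rfl]
        simp; ring
      · show MvPolynomial.eval g (cheb 1) = _
        rw [show cheb 1 = X 0 from rfl, eval_X, hg0]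
        ring
      · show MvPolynomial.eval g (cheb 2) = _
        rw [show cheb 2 = 3 * X 0 ^ 2 - 2 * X 1 from rfl]
        simp only [map_sub, map_mul, map_pow, map_ofNat, eval_X, hg0, hg1]
        ring
    | succ n ih =>
      refine ⟨ih.2.1, ih.2.2, ?_⟩
      show MvPolynomial.eval g (cheb (n+3)) = _
      rw [show cheb (n+3) = 3 * X 0 * cheb (n+2) - 3 * X 1 * cheb (n+1) + cheb n from rfl]
      simp only [map_add, map_sub, map_mul, map_ofNat, eval_X, hg0, hg1, ih.1, ih.2.1, ih.2.2]
      rw [← newton A B C hABC n]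
      ring
  rw [hphi m]
  exact (key m).1

lemma circle_infinite : {z : ℂ | ‖z‖ = 1}.Infinite := by
  haveI : Infinite (Set.Ioo (0:ℝ) 1) := Set.Ioo.infinite (by norm_num)
  refine Set.infinite_of_injective_forall_mem
    (f := fun t : Set.Ioo (0:ℝ) 1 => Complex.exp (t * Complex.I)) ?_ ?_
  · rintro ⟨s, hs⟩ ⟨t, ht⟩ h
    obtain ⟨n, hn⟩ := Complex.exp_eq_exp_iff_exists_int.mp h
    have h2 : (s:ℂ) * Complex.I = ((t:ℂ) + n * (2*Real.pi)) * Complex.I := by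
      linear_combination hn
    have hr : (s:ℂ) = (t:ℂ) + n * (2*Real.pi) := mul_right_cancel₀ Complex.I_ne_zero h2
    have hr2 : s = t + n * (2*Real.pi) := by exact_mod_cast hr
    have hn0 : n = 0 := by
      by_contra h0
      rcases lt_or_gt_of_ne h0 with hlt | hgt
      · have h1 : (n:ℝ) ≤ -1 := by exact_mod_cast (by omega : n ≤ -1)
        nlinarith [hs.1, hs.2, ht.1, ht.2, Real.pi_gt_three]
      · have h1 : (1:ℝ) ≤ (n:ℝ) := by exact_mod_cast (by omega : 1 ≤ n)
        nlinarith [hs.1, hs.2, ht.1, ht.2, Real.pi_gt_three]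
    apply Subtype.ext
    rw [hn0] at hr2; simpa using hr2
  · intro t
    simp [Complex.norm_exp]

lemma restrict_poly (Q : MvPolynomial (Fin 2) ℂ) (g : Fin 2 → Polynomial ℂ) (v : ℂ) :
    Polynomial.eval v (MvPolynomial.eval₂ Polynomial.C g Q) =
      MvPolynomial.eval (fun i => Polynomial.eval v (g i)) Q := by
  rw [show Polynomial.eval v (MvPolynomial.eval₂ Polynomial.C g Q)
      = (Polynomial.evalRingHom v) (MvPolynomial.eval₂ Polynomial.C g Q) from rfl,
    MvPolynomial.eval₂_comp_left]
  rw [show (Polynomial.evalRingHom v).comp Polynomial.C = RingHom.id ℂ from by ext a; simp]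
  rw [MvPolynomial.eval₂_id]
  rfl

/-- A polynomial vanishing on the torus vanishes everywhere. -/
lemma vanish_of_torus (Q : MvPolynomial (Fin 2) ℂ)
    (h : ∀ u v : ℂ, ‖u‖ = 1 → ‖v‖ = 1 →
      MvPolynomial.eval (fun i : Fin 2 => if i = 0 then u else v) Q = 0) :
    ∀ u v : ℂ, MvPolynomial.eval (fun i : Fin 2 => if i = 0 then u else v) Q = 0 := by
  have step1 : ∀ u : ℂ, ‖u‖ = 1 → ∀ v : ℂ,
      MvPolynomial.eval (fun i : Fin 2 => if i = 0 then u else v) Q = 0 := by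
    intro u hu
    set qu : Polynomial ℂ := MvPolynomial.eval₂ Polynomial.C
      (fun i : Fin 2 => if i = 0 then Polynomial.C u else Polynomial.X) Q with hqu
    have hev : ∀ v : ℂ, Polynomial.eval v qu =
        MvPolynomial.eval (fun i : Fin 2 => if i = 0 then u else v) Q := by
      intro v
      rw [hqu, restrict_poly]
      have hfun : (fun i : Fin 2 => Polynomial.eval v (if i = 0 then Polynomial.C u else Polynomial.X))
          = (fun i : Fin 2 => if i = 0 then u else v) := by
        funext i; by_cases hi : i = 0 <;> simp [hi]
      rw [hfun]
    have hz : qu = 0 := by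
      apply Polynomial.eq_zero_of_infinite_isRoot
      apply Set.Infinite.mono _ circle_infinite
      intro v hv
      simp only [Set.mem_setOf_eq, Polynomial.IsRoot]
      rw [hev v]
      exact h u v hu hv
    intro v
    rw [← hev v, hz, Polynomial.eval_zero]
  intro u v
  set pu : Polynomial ℂ := MvPolynomial.eval₂ Polynomial.C
    (fun i : Fin 2 => if i = 0 then Polynomial.X else Polynomial.C v) Q with hpu
  have hev : ∀ w : ℂ, Polynomial.eval w pu =
      MvPolynomial.eval (fun i : Fin 2 => if i = 0 then w else v) Q := by
    intro w
    rw [hpu, restrict_poly]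
    have hfun : (fun i : Fin 2 => Polynomial.eval w (if i = 0 then Polynomial.X else Polynomial.C v))
        = (fun i : Fin 2 => if i = 0 then w else v) := by
      funext i; by_cases hi : i = 0 <;> simp [hi]
    rw [hfun]
  have hz : pu = 0 := by
    apply Polynomial.eq_zero_of_infinite_isRoot
    apply Set.Infinite.mono _ circle_infinite
    intro w hw
    simp only [Set.mem_setOf_eq, Polynomial.IsRoot]
    rw [hev w]
    exact step1 w hw v
  rw [← hev u, hz, Polynomial.eval_zero]

lemma surj (x y : ℂ) : ∃ u v : ℂ, u ≠ 0 ∧ v ≠ 0 ∧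
    (u + v + (u*v)⁻¹)/3 = x ∧ (u⁻¹ + v⁻¹ + u*v)/3 = y := by
  obtain ⟨α, hα⟩ := IsAlgClosed.exists_root
    (Polynomial.X^3 - Polynomial.C (3*x) * Polynomial.X^2 + Polynomial.C (3*y) * Polynomial.X - Polynomial.C 1) (by
      have : (Polynomial.X^3 - Polynomial.C (3*x) * Polynomial.X^2 + Polynomial.C (3*y) * Polynomial.X - Polynomial.C 1 : Polynomial ℂ).degree = 3 := by
        compute_degree!
      rw [this]; decide)
  have hcube : α^3 - 3*x*α^2 + 3*y*α - 1 = 0 := by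
    have := hα; simp [Polynomial.IsRoot, Polynomial.eval_sub, Polynomial.eval_add] at this
    linear_combination this
  have hα0 : α ≠ 0 := by
    intro h; rw [h] at hcube; simp at hcube
  obtain ⟨β, hβ⟩ := IsAlgClosed.exists_root
    (Polynomial.X^2 + Polynomial.C (α - 3*x) * Polynomial.X + Polynomial.C α⁻¹) (by
      have : (Polynomial.X^2 + Polynomial.C (α - 3*x) * Polynomial.X + Polynomial.C α⁻¹ : Polynomial ℂ).degree = 2 := by compute_degree!
      rw [this]; decide)
  have hq : β^2 + (α - 3*x)*β + α⁻¹ = 0 := by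
    have := hβ; simp [Polynomial.IsRoot] at this; linear_combination this
  have hβ0 : β ≠ 0 := by
    intro h; rw [h] at hq; simp [hα0] at hq
  have hq' : α*β^2 + α^2*β - 3*x*α*β + 1 = 0 := by
    have h2 : α * α⁻¹ = 1 := mul_inv_cancel₀ hα0
    linear_combination α * hq - h2
  refine ⟨α, β, hα0, hβ0, ?_, ?_⟩
  · rw [div_eq_iff (by norm_num : (3:ℂ) ≠ 0)]
    field_simp
    linear_combination hq'
  · rw [div_eq_iff (by norm_num : (3:ℂ) ≠ 0)]
    field_simp
    linear_combination α * hq' - β * hcube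

lemma poly_zero_of_sym (P : MvPolynomial (Fin 2) ℂ)
    (h : ∀ u v : ℂ, ‖u‖ = 1 → ‖v‖ = 1 →
      MvPolynomial.eval (fun i : Fin 2 =>
        if i = 0 then (u + v + (u*v)⁻¹)/3 else (u⁻¹ + v⁻¹ + u*v)/3) P = 0) :
    P = 0 := by
  classical
  set N := P.totalDegree with hN
  set Q : MvPolynomial (Fin 2) ℂ := ∑ d ∈ P.support,
    MvPolynomial.C (MvPolynomial.coeff d P) *
      (X 0^2 * X 1 + X 0 * X 1^2 + 1)^(d 0) *
      (X 0 + X 1 + X 0^2 * X 1^2)^(d 1) *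
      (3 * X 0 * X 1)^(N - (d 0 + d 1)) with hQ
  have keyQ : ∀ u v : ℂ, u ≠ 0 → v ≠ 0 →
      MvPolynomial.eval (fun i : Fin 2 => if i = 0 then u else v) Q =
      (3*u*v)^N * MvPolynomial.eval (fun i : Fin 2 =>
        if i = 0 then (u + v + (u*v)⁻¹)/3 else (u⁻¹ + v⁻¹ + u*v)/3) P := by
    intro u v hu hv
    rw [hQ, map_sum, MvPolynomial.eval_eq' (fun i : Fin 2 =>
      if i = 0 then (u + v + (u*v)⁻¹)/3 else (u⁻¹ + v⁻¹ + u*v)/3) P, Finset.mul_sum]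
    apply Finset.sum_congr rfl
    intro d hd
    have hdN : d 0 + d 1 ≤ N := by
      have h1 := MvPolynomial.le_totalDegree hd
      rwa [Finsupp.sum_fintype _ _ (fun _ => rfl), Fin.sum_univ_two] at h1
    simp only [map_mul, map_add, map_pow, map_one, eval_C, eval_X, map_ofNat,
      Fin.prod_univ_two, reduceIte, Fin.one_eq_zero_iff, Nat.succ_ne_self, ite_false,
      if_neg (by decide : ¬((1:Fin 2) = 0))]
    have b1 : ((u + v + (u*v)⁻¹)/3) * (3*u*v) = u^2*v + u*v^2 + 1 := by
      field_simp
    have b2 : ((u⁻¹ + v⁻¹ + u*v)/3) * (3*u*v) = u + v + u^2*v^2 := by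
      field_simp; ring
    rw [show (3*u*v)^N = (3*u*v)^(d 0) * (3*u*v)^(d 1) * (3*u*v)^(N - (d 0 + d 1)) by
      rw [← pow_add, ← pow_add, Nat.add_sub_cancel' hdN]]
    rw [← b1, ← b2, mul_pow ((u + v + (u*v)⁻¹)/3) (3*u*v) (d 0),
      mul_pow ((u⁻¹ + v⁻¹ + u*v)/3) (3*u*v) (d 1)]
    ring
  have hvan : ∀ u v : ℂ,
      MvPolynomial.eval (fun i : Fin 2 => if i = 0 then u else v) Q = 0 := by
    apply vanish_of_torus
    intro u v hu hv
    have hu0 : u ≠ 0 := by intro h0; rw [h0] at hu; simp at hu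
    have hv0 : v ≠ 0 := by intro h0; rw [h0] at hv; simp at hv
    rw [keyQ u v hu0 hv0, h u v hu hv, mul_zero]
  have hPz : ∀ x y : ℂ,
      MvPolynomial.eval (fun i : Fin 2 => if i = 0 then x else y) P = 0 := by
    intro x y
    obtain ⟨u, v, hu0, hv0, hx, hy⟩ := surj x y
    have h1 := keyQ u v hu0 hv0
    rw [hvan u v] at h1
    have h3 : (3*u*v)^N ≠ 0 := pow_ne_zero _ (by
      simp [hu0, hv0])
    have h4 := (mul_eq_zero.mp h1.symm).resolve_left h3
    rw [← hx, ← hy]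
    convert h4 using 2
  have := MvPolynomial.funext (p := P) (q := 0) (fun g => by
    rw [show g = (fun i : Fin 2 => if i = 0 then g 0 else g 1) from by
      funext i; fin_cases i <;> simp]
    simp [hPz (g 0) (g 1)])
  exact this

lemma conj_phi1 (θ : ℝ × ℝ) :
    (starRingEnd ℂ) (phi1 θ) =
      (Complex.exp (2 * Real.pi * Complex.I * θ.1) * Complex.exp (-(2 * Real.pi * Complex.I * θ.2))
       + Complex.exp (-(2 * Real.pi * Complex.I * θ.2)) * Complex.exp (2 * Real.pi * Complex.I * (θ.2 - θ.1))
       + Complex.exp (2 * Real.pi * Complex.I * (θ.2 - θ.1)) * Complex.exp (2 * Real.pi * Complex.I * θ.1)) / 3 := by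
  set A := Complex.exp (2 * Real.pi * Complex.I * θ.1) with hA
  set B := Complex.exp (-(2 * Real.pi * Complex.I * θ.2)) with hB
  set C := Complex.exp (2 * Real.pi * Complex.I * (θ.2 - θ.1)) with hC
  have h1 : (starRingEnd ℂ) A = B * C := by
    rw [hA, hB, hC, ← Complex.exp_conj, ← Complex.exp_add]
    congr 1
    simp only [map_mul, Complex.conj_I, Complex.conj_ofReal, map_ofNat]
    ring
  have h2 : (starRingEnd ℂ) B = C * A := by
    rw [hA, hB, hC, ← Complex.exp_conj, ← Complex.exp_add]
    congr 1
    simp only [map_neg, map_mul, Complex.conj_I, Complex.conj_ofReal, map_ofNat]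
    ring
  have h3 : (starRingEnd ℂ) C = A * B := by
    rw [hA, hB, hC, ← Complex.exp_conj, ← Complex.exp_add]
    congr 1
    simp only [map_mul, map_sub, Complex.conj_I, Complex.conj_ofReal, map_ofNat]
    ring
  rw [phi1, ← hA, ← hB, ← hC]
  simp only [map_mul, map_add, map_one, map_div₀, map_ofNat, h1, h2, h3]
  push_cast; ring

lemma torus_form (P : MvPolynomial (Fin 2) ℂ)
    (h : ∀ θ : ℝ × ℝ, MvPolynomial.eval
      (fun i : Fin 2 => if i = 0 then phi1 θ else (starRingEnd ℂ) (phi1 θ)) P = 0) :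
    ∀ u v : ℂ, ‖u‖ = 1 → ‖v‖ = 1 →
      MvPolynomial.eval (fun i : Fin 2 =>
        if i = 0 then (u + v + (u*v)⁻¹)/3 else (u⁻¹ + v⁻¹ + u*v)/3) P = 0 := by
  intro u v hu hv
  have hu0 : u ≠ 0 := by intro h0; rw [h0] at hu; simp at hu
  have hv0 : v ≠ 0 := by intro h0; rw [h0] at hv; simp at hv
  have hπ : (Real.pi : ℂ) ≠ 0 := by exact_mod_cast Real.pi_ne_zero
  have eu : Complex.exp ((Complex.arg u : ℂ) * Complex.I) = u := by
    conv_rhs => rw [← Complex.norm_mul_exp_arg_mul_I u]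
    rw [hu]; simp
  have ev : Complex.exp ((Complex.arg v : ℂ) * Complex.I) = v := by
    conv_rhs => rw [← Complex.norm_mul_exp_arg_mul_I v]
    rw [hv]; simp
  set θ : ℝ × ℝ := (Complex.arg u / (2*Real.pi), -(Complex.arg v) / (2*Real.pi)) with hθ
  have hA : Complex.exp (2 * Real.pi * Complex.I * θ.1) = u := by
    rw [← eu]; congr 1; rw [hθ]; push_cast; field_simp
  have hB : Complex.exp (-(2 * Real.pi * Complex.I * θ.2)) = v := by
    rw [← ev]; congr 1; rw [hθ]; push_cast; field_simp
  have hC : Complex.exp (2 * Real.pi * Complex.I * (θ.2 - θ.1)) = (u*v)⁻¹ := by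
    rw [← eu, ← ev, ← Complex.exp_add, ← Complex.exp_neg]
    congr 1; rw [hθ]; push_cast; field_simp; ring
  have h1 : phi1 θ = (u + v + (u*v)⁻¹)/3 := by
    rw [phi1, hA, hB, hC]; ring
  have h2 : (starRingEnd ℂ) (phi1 θ) = (u⁻¹ + v⁻¹ + u*v)/3 := by
    rw [conj_phi1, hA, hB, hC]
    field_simp
    ring
  have := h θ
  rwa [h2, h1] at this

/-- There is a unique sequence of bivariate polynomials `f_m ∈ ℂ[x, x̄]` with
`f_m(φ₁(θ), conj (φ₁(θ))) = φ₁(mθ)` for all `θ ∈ ℝ²`; moreover `f_0 = 1`, `f_1 = x`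
and `f_2 = 3x² − 2x̄`. -/
theorem generalized_chebyshev_exists_unique :
    ∃! f : ℕ → MvPolynomial (Fin 2) ℂ,
      (∀ (m : ℕ) (θ : ℝ × ℝ),
        MvPolynomial.eval
          (fun i : Fin 2 => if i = 0 then phi1 θ else (starRingEnd ℂ) (phi1 θ)) (f m) =
          phi1 ((m : ℝ) * θ.1, (m : ℝ) * θ.2)) ∧
      f 0 = 1 ∧ f 1 = MvPolynomial.X 0 ∧
      f 2 = 3 * (MvPolynomial.X 0) ^ 2 - 2 * MvPolynomial.X 1 := by
  refine ⟨cheb, ⟨fun m θ => cheb_eval m θ, by simp [cheb], by simp [cheb], by simp [cheb]⟩, ?_⟩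
  intro g hg
  funext m
  have hvan : ∀ θ : ℝ × ℝ, MvPolynomial.eval
      (fun i : Fin 2 => if i = 0 then phi1 θ else (starRingEnd ℂ) (phi1 θ))
      (g m - cheb m) = 0 := by
    intro θ
    rw [map_sub, hg.1 m θ, cheb_eval m θ, sub_self]
  have hz := poly_zero_of_sym (g m - cheb m) (torus_form _ hvan)
  exact sub_eq_zero.mp hz
end
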